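/- Let φ ∈ (0,1), ω = e^{2πiφ}, α ∈ ℂ and β = −iα. Suppose λ ∈ ℂ satisfies λ² = ω[(1−2ω+ω²) + i(1−ω+ω²)]/(1−2ω+2ω²) (the denominator 1−2ω+2ω² being nonzero), and define θ_s = (√2/λ)(−λ² + ω(1+i)/2). Then |λ| = 1, θ_s² = ω/(ω²−3ω+1+i(ω²−1)), and the pair Ψ^L, Ψ^R defined by Ψ(x) = (−θ_s)^x · (α, (1−ω)α+ωβ) for x ≥ 1, Ψ(0) = (α, β), and Ψ(x) = θ_s^{−x} · ((ω−1)β+ωα, β) for x ≤ −1, satisfies the eigenvalue equations of the Wojcik model with eigenvalue λ. -/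

import Mathlib

noncomputable section

/-- The coin phase of the Wojcik model: `ω` at the origin, `1` elsewhere. -/
def wojcikCoin (ω : ℂ) (x : ℤ) : ℂ := if x = 0 then ω else 1

/-- `ΨL, ΨR : ℤ → ℂ` satisfy the eigenvalue equations of the Wojcik model with
eigenvalue `lam` and phase `ω`. -/
def WojcikEigenEq (ω lam : ℂ) (ΨL ΨR : ℤ → ℂ) : Prop :=
  ∀ x : ℤ,
    lam * ΨL x = wojcikCoin ω (x + 1) / (Real.sqrt 2 : ℂ) * (ΨL (x + 1) + ΨR (x + 1)) ∧
    lam * ΨR x = wojcikCoin ω (x - 1) / (Real.sqrt 2 : ℂ) * (ΨL (x - 1) - ΨR (x - 1))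

/-- Left component of the explicit stationary state. -/
def wojcikPsiL (α β ω θ : ℂ) (x : ℤ) : ℂ :=
  if 1 ≤ x then (-θ) ^ x.toNat * α
  else if x = 0 then α
  else θ ^ (-x).toNat * ((ω - 1) * β + ω * α)

/-- Right component of the explicit stationary state. -/
def wojcikPsiR (α β ω θ : ℂ) (x : ℤ) : ℂ :=
  if 1 ≤ x then (-θ) ^ x.toNat * ((1 - ω) * α + ω * β)
  else if x = 0 then β
  else θ ^ (-x).toNat * β

set_option maxHeartbeats 1600000 in
theorem wojcik_eigen_solution_beta_eq_neg_i_alpha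
    (φ : ℝ) (hφ : φ ∈ Set.Ioo (0 : ℝ) 1) (ω α β lam θ : ℂ)
    (hω : ω = Complex.exp (2 * (Real.pi : ℂ) * Complex.I * (φ : ℂ)))
    (hβ : β = -Complex.I * α)
    (hden : 1 - 2 * ω + 2 * ω ^ 2 ≠ 0)
    (hlam : lam ^ 2 =
      ω * ((1 - 2 * ω + ω ^ 2) + Complex.I * (1 - ω + ω ^ 2)) / (1 - 2 * ω + 2 * ω ^ 2))
    (hθ : θ = (Real.sqrt 2 : ℂ) / lam * (-lam ^ 2 + ω * (1 + Complex.I) / 2)) :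
    ‖lam‖ = 1 ∧
    θ ^ 2 = ω / (ω ^ 2 - 3 * ω + 1 + Complex.I * (ω ^ 2 - 1)) ∧
    WojcikEigenEq ω lam (wojcikPsiL α β ω θ) (wojcikPsiR α β ω θ) := by
  subst hβ
  set I := Complex.I with hIdef
  have hI : I ^ 2 = -1 := Complex.I_sq
  have hωne : ω ≠ 0 := by rw [hω]; exact Complex.exp_ne_zero _
  have hconjω : (starRingEnd ℂ) ω = ω⁻¹ := by
    rw [hω, ← Complex.exp_conj, ← Complex.exp_neg]
    congr 1
    simp only [map_mul, map_ofNat, Complex.conj_I, Complex.conj_ofReal, hIdef]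
    ring
  have hl2 : lam ^ 2 * (1 - 2 * ω + 2 * ω ^ 2)
      = ω * ((1 - 2 * ω + ω ^ 2) + I * (1 - ω + ω ^ 2)) := by
    rw [hlam]; exact div_mul_cancel₀ _ hden
  -- conjugate denominator nonzero
  have h1 : (starRingEnd ℂ) (1 - 2 * ω + 2 * ω ^ 2) ≠ 0 := by
    simpa only [ne_eq, map_eq_zero] using hden
  have hconjD : (starRingEnd ℂ) (1 - 2 * ω + 2 * ω ^ 2) = (ω ^ 2 - 2 * ω + 2) / ω ^ 2 := by
    simp only [map_add, map_sub, map_mul, map_one, map_ofNat, map_pow, hconjω]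
    field_simp
  have hDs : ω ^ 2 - 2 * ω + 2 ≠ 0 := by
    intro h
    apply h1
    rw [hconjD, h, zero_div]
  -- conjugate of lam^2
  have hc := congrArg (starRingEnd ℂ) hlam
  rw [map_div₀, map_mul] at hc
  have hcN : (starRingEnd ℂ) ((1 - 2 * ω + ω ^ 2) + I * (1 - ω + ω ^ 2))
      = ((ω ^ 2 - 2 * ω + 1) - I * (ω ^ 2 - ω + 1)) / ω ^ 2 := by
    simp only [map_add, map_sub, map_mul, map_one, map_ofNat, map_pow, hconjω,
      hIdef, Complex.conj_I]
    field_simp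
    ring
  have hc2 : ((starRingEnd ℂ) lam) ^ 2 * ((ω ^ 2 - 2 * ω + 2) * ω)
      = (ω ^ 2 - 2 * ω + 1) - I * (ω ^ 2 - ω + 1) := by
    rw [← map_pow, hc, hconjω, hcN, hconjD]
    rw [div_mul_eq_mul_div, div_eq_iff (div_ne_zero hDs (pow_ne_zero 2 hωne))]
    field_simp
  have key' : lam ^ 2 * ((starRingEnd ℂ) lam) ^ 2
        * ((1 - 2 * ω + 2 * ω ^ 2) * ((ω ^ 2 - 2 * ω + 2) * ω))
      = 1 * ((1 - 2 * ω + 2 * ω ^ 2) * ((ω ^ 2 - 2 * ω + 2) * ω)) := by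
    linear_combination (((starRingEnd ℂ) lam) ^ 2 * ((ω ^ 2 - 2 * ω + 2) * ω)) * hl2
      + (ω * ((1 - 2 * ω + ω ^ 2) + I * (1 - ω + ω ^ 2))) * hc2
      + (-ω + 2 * ω ^ 2 - 3 * ω ^ 3 + 2 * ω ^ 4 - ω ^ 5) * hI
  have key : lam ^ 2 * ((starRingEnd ℂ) lam) ^ 2 = 1 :=
    mul_right_cancel₀ (mul_ne_zero hden (mul_ne_zero hDs hωne)) key'
  have hnsq : (Complex.normSq (lam ^ 2) : ℂ) = 1 := by
    rw [← Complex.mul_conj, map_pow]; exact key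
  have hnsq' : Complex.normSq (lam ^ 2) = 1 := by exact_mod_cast hnsq
  have h4 : ‖lam‖ ^ 4 = 1 := by
    have h := Complex.sq_norm (lam ^ 2)
    rw [hnsq', norm_pow] at h
    nlinarith [h]
  have habs : ‖lam‖ = 1 := by
    have h0 : 0 ≤ ‖lam‖ := norm_nonneg _
    have hfac : (‖lam‖ - 1) *
        (‖lam‖ ^ 3 + ‖lam‖ ^ 2 + ‖lam‖ + 1) = 0 := by
      linear_combination h4
    rcases mul_eq_zero.mp hfac with h | h
    · linarith
    · nlinarith [pow_nonneg h0 3, pow_nonneg h0 2]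
  have hlamne : lam ≠ 0 := by
    intro h; rw [h] at habs; simp at habs
  have hl2ne : lam ^ 2 ≠ 0 := pow_ne_zero 2 hlamne
  -- nonvanishing of N and M
  have hN : (1 - 2 * ω + ω ^ 2) + I * (1 - ω + ω ^ 2) ≠ 0 := by
    intro h
    rw [h, mul_zero] at hl2
    rcases mul_eq_zero.mp hl2 with h' | h'
    · exact hl2ne h'
    · exact hden h'
  have hM : ω ^ 2 - 3 * ω + 1 + I * (ω ^ 2 - 1) ≠ 0 := by
    intro h
    have hid : (1 - 2 * ω + I) ^ 2 * (ω ^ 2 - 3 * ω + 1 + I * (ω ^ 2 - 1))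
        = 2 * (1 - 2 * ω + 2 * ω ^ 2) * ((1 - 2 * ω + ω ^ 2) + I * (1 - ω + ω ^ 2)) := by
      rw [hIdef]
      apply Complex.ext <;>
        simp [Complex.ext_iff, pow_two, Complex.mul_re, Complex.mul_im] <;> ring
    rw [h, mul_zero] at hid
    exact (mul_ne_zero (mul_ne_zero two_ne_zero hden) hN) hid.symm
  have hk2 : ((Real.sqrt 2 : ℝ) : ℂ) ^ 2 = 2 := by
    norm_cast; rw [Real.sq_sqrt]; norm_num
  have hkne : ((Real.sqrt 2 : ℝ) : ℂ) ≠ 0 := by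
    norm_cast; positivity
  -- θ² value
  have hth2 : θ ^ 2 * lam ^ 2 = 2 * (ω * (1 + I) / 2 - lam ^ 2) ^ 2 := by
    rw [hθ, mul_pow, div_pow, hk2]
    field_simp
    ring
  have goal2 : θ ^ 2 = ω / (ω ^ 2 - 3 * ω + 1 + I * (ω ^ 2 - 1)) := by
    rw [eq_div_iff hM]
    apply mul_right_cancel₀ (mul_ne_zero hl2ne (pow_ne_zero 2 hden))
    linear_combination ((ω ^ 2 - 3 * ω + 1 + I * (ω ^ 2 - 1)) * (1 - 2 * ω + 2 * ω ^ 2) ^ 2) * hth2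
      + (2 * (ω ^ 2 - 3 * ω + 1 + I * (ω ^ 2 - 1)) * (lam ^ 2 * (1 - 2 * ω + 2 * ω ^ 2)
          - ω * ((1 - 2 * ω + ω ^ 2) + I * (1 - ω + ω ^ 2)))
        - 4 * (ω ^ 2 - 3 * ω + 1 + I * (ω ^ 2 - 1)) * ((1 - 2 * ω + 2 * ω ^ 2) * (ω * (1 + I) / 2)
          - ω * ((1 - 2 * ω + ω ^ 2) + I * (1 - ω + ω ^ 2)))
        - ω * (1 - 2 * ω + 2 * ω ^ 2)) * hl2
      + ((-1/2) * ω ^ 2 + (-1/2) * ω ^ 2 * I + (1/2) * ω ^ 3 + (3/2) * ω ^ 4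
          + (1/2) * ω ^ 4 * I + (-2) * ω ^ 5) * hI
  -- scalar identities
  have S1 : lam ^ 2 * (1 - (1 + I) * ω) = ω * ((1 + I) - I * ω) := by
    apply mul_right_cancel₀ hden
    linear_combination (1 - (1 + I) * ω) * hl2 + (-ω ^ 2 + ω ^ 3 - ω ^ 4) * hI
  have S4 : lam ^ 2 * (ω - I * ω + I) = ω * (1 + I) / 2 * (ω - I * ω + 2 * I) := by
    apply mul_right_cancel₀ hden
    linear_combination (ω - I * ω + I) * hl2 + ((1/2) * ω ^ 2 - ω ^ 3) * hI
  have S5 : 2 * (ω * (1 + I) / 2 - lam ^ 2) * (ω - I * ω + I) = ω * (1 - I) := by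
    apply mul_right_cancel₀ hden
    linear_combination (-2 * (ω - I * ω + I)) * hl2 + (-ω + ω ^ 2) * hI
  have hthl : θ * lam = (Real.sqrt 2 : ℂ) * (ω * (1 + I) / 2 - lam ^ 2) := by
    rw [hθ]
    field_simp
    ring
  -- J identities
  have J1 : (Real.sqrt 2 : ℂ) * lam * α = -θ * ((2 - (1 + I) * ω) * α) := by
    apply mul_left_cancel₀ hlamne
    linear_combination ((2 - (1 + I) * ω) * α) * hthl + (-(Real.sqrt 2 : ℂ) * α) * S1
      + (-(1/2) * ω ^ 2 * (Real.sqrt 2 : ℂ) * α) * hI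
  have J2 : (Real.sqrt 2 : ℂ) * lam * θ * ((1 - (1 + I) * ω) * α) = -((1 + I) * ω * α) := by
    linear_combination ((Real.sqrt 2 : ℂ) * (1 - (1 + I) * ω) * α) * hthl
      + ((ω * (1 + I) / 2 - lam ^ 2) * (1 - (1 + I) * ω) * α) * hk2
      + (-2 * α) * S1 + (-ω ^ 2 * α) * hI
  have J4 : (Real.sqrt 2 : ℂ) * lam * (-I * α) = θ * ((ω - I * ω + 2 * I) * α) := by
    apply mul_left_cancel₀ hlamne
    linear_combination (-(ω - I * ω + 2 * I) * α) * hthl + ((Real.sqrt 2 : ℂ) * α) * S4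
  have J5 : (Real.sqrt 2 : ℂ) * lam * θ * ((ω - I * ω + I) * α) = ω * (1 - I) * α := by
    linear_combination ((Real.sqrt 2 : ℂ) * (ω - I * ω + I) * α) * hthl
      + ((ω * (1 + I) / 2 - lam ^ 2) * (ω - I * ω + I) * α) * hk2 + α * S5
  -- evaluation helpers
  have hL0 : wojcikPsiL α (-I * α) ω θ 0 = α := by simp [wojcikPsiL]
  have hR0 : wojcikPsiR α (-I * α) ω θ 0 = -I * α := by simp [wojcikPsiR]
  have hLpos : ∀ n : ℕ, 1 ≤ n → wojcikPsiL α (-I * α) ω θ (n : ℤ) = (-θ) ^ n * α := by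
    intro n hn
    simp only [wojcikPsiL]
    rw [if_pos (show (1 : ℤ) ≤ (n : ℤ) by exact_mod_cast hn)]
    simp
  have hRpos : ∀ n : ℕ, 1 ≤ n → wojcikPsiR α (-I * α) ω θ (n : ℤ)
      = (-θ) ^ n * ((1 - ω) * α + ω * (-I * α)) := by
    intro n hn
    simp only [wojcikPsiR]
    rw [if_pos (show (1 : ℤ) ≤ (n : ℤ) by exact_mod_cast hn)]
    simp
  have hLneg : ∀ n : ℕ, 1 ≤ n → wojcikPsiL α (-I * α) ω θ (-(n : ℤ))
      = θ ^ n * ((ω - 1) * (-I * α) + ω * α) := by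
    intro n hn
    simp only [wojcikPsiL]
    rw [if_neg (by omega), if_neg (by omega)]
    simp
  have hRneg : ∀ n : ℕ, 1 ≤ n → wojcikPsiR α (-I * α) ω θ (-(n : ℤ))
      = θ ^ n * (-I * α) := by
    intro n hn
    simp only [wojcikPsiR]
    rw [if_neg (by omega), if_neg (by omega)]
    simp
  have hcoin0 : wojcikCoin ω 0 = ω := if_pos rfl
  have hcoinne : ∀ y : ℤ, y ≠ 0 → wojcikCoin ω y = 1 := fun y hy => if_neg hy
  refine ⟨habs, goal2, ?_⟩
  have key0 :
      lam * wojcikPsiL α (-I * α) ω θ 0 = wojcikCoin ω (0 + 1) / (Real.sqrt 2 : ℂ)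
        * (wojcikPsiL α (-I * α) ω θ (0 + 1) + wojcikPsiR α (-I * α) ω θ (0 + 1)) ∧
      lam * wojcikPsiR α (-I * α) ω θ 0 = wojcikCoin ω (0 - 1) / (Real.sqrt 2 : ℂ)
        * (wojcikPsiL α (-I * α) ω θ (0 - 1) - wojcikPsiR α (-I * α) ω θ (0 - 1)) := by
    constructor
    · rw [show (0 : ℤ) + 1 = ((1 : ℕ) : ℤ) by norm_num, hL0,
        hcoinne _ (by omega), hLpos 1 le_rfl, hRpos 1 le_rfl]
      field_simp
      linear_combination J1
    · rw [show (0 : ℤ) - 1 = -((1 : ℕ) : ℤ) by norm_num, hR0,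
        hcoinne _ (by omega), hLneg 1 le_rfl, hRneg 1 le_rfl]
      field_simp
      linear_combination J4
  intro x
  obtain ⟨n, rfl | rfl⟩ := x.eq_nat_or_neg
  · match n with
    | 0 => simpa using key0
    | 1 =>
      constructor
      · rw [show ((1 : ℕ) : ℤ) + 1 = ((2 : ℕ) : ℤ) by norm_num,
          hcoinne _ (by omega), hLpos 1 le_rfl, hLpos 2 (by omega), hRpos 2 (by omega)]
        field_simp
        linear_combination (-θ) * J1
      · rw [show ((1 : ℕ) : ℤ) - 1 = (0 : ℤ) by norm_num,
          hcoin0, hRpos 1 le_rfl, hL0, hR0]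
        field_simp
        linear_combination -J2
    | (m + 2) =>
      constructor
      · rw [show ((m + 2 : ℕ) : ℤ) + 1 = ((m + 3 : ℕ) : ℤ) by push_cast; ring,
          hcoinne _ (by omega), hLpos (m + 2) (by omega), hLpos (m + 3) (by omega),
          hRpos (m + 3) (by omega)]
        field_simp
        linear_combination ((-θ) ^ (m + 2)) * J1
      · rw [show ((m + 2 : ℕ) : ℤ) - 1 = ((m + 1 : ℕ) : ℤ) by push_cast; ring,
          hcoinne _ (by omega), hRpos (m + 2) (by omega), hLpos (m + 1) (by omega),
          hRpos (m + 1) (by omega)]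
        field_simp
        linear_combination (-(-θ) ^ (m + 1)) * J2
  · match n with
    | 0 => simpa using key0
    | 1 =>
      constructor
      · rw [show -((1 : ℕ) : ℤ) + 1 = (0 : ℤ) by norm_num,
          hcoin0, hLneg 1 le_rfl, hL0, hR0]
        field_simp
        linear_combination J5
      · rw [show -((1 : ℕ) : ℤ) - 1 = -((2 : ℕ) : ℤ) by norm_num,
          hcoinne _ (by omega), hRneg 1 le_rfl, hLneg 2 (by omega), hRneg 2 (by omega)]
        field_simp
        linear_combination θ * J4
    | (m + 2) =>
      constructor
      · rw [show -((m + 2 : ℕ) : ℤ) + 1 = -((m + 1 : ℕ) : ℤ) by push_cast; ring,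
          hcoinne _ (by omega), hLneg (m + 2) (by omega), hLneg (m + 1) (by omega),
          hRneg (m + 1) (by omega)]
        field_simp
        linear_combination (θ ^ (m + 1)) * J5
      · rw [show -((m + 2 : ℕ) : ℤ) - 1 = -((m + 3 : ℕ) : ℤ) by push_cast; ring,
          hcoinne _ (by omega), hRneg (m + 2) (by omega), hLneg (m + 3) (by omega),
          hRneg (m + 3) (by omega)]
        field_simp
        linear_combination (θ ^ (m + 2)) * J4

end
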